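/- arXiv:1002.0387 — 4 statements merged into one kernel-verified Lean document; each statement's English description precedes it below -/
import Mathlib

section
/- Let α be an m×m complex matrix with ‖α‖ < 1, let ρ = (I - α*α)^{1/2}, ρ̃ = (I - αα*)^{1/2}, a = I + α, b = I - α. Then a*ρ̃^{-2}a = aρ^{-2}a*, b*ρ̃^{-2}b = bρ^{-2}b*, and a*ρ̃^{-2}b + aρ^{-2}b* = b*ρ̃^{-2}a + bρ^{-2}a* = 2I. -/
open Matrix
open scoped Matrix.Norms.L2Operator ComplexOrder

namespace Matrix.PosSemidef

/-- The square root of a positive semidefinite matrix, as defined in the older Mathlib. -/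
noncomputable def sqrt {n 𝕜 : Type*} [Fintype n] [RCLike 𝕜] [DecidableEq n]
    {A : Matrix n n 𝕜} (hA : PosSemidef A) : Matrix n n 𝕜 :=
  hA.1.eigenvectorUnitary.1 * diagonal ((↑) ∘ (√·) ∘ hA.1.eigenvalues) *
    (star hA.1.eigenvectorUnitary.1)

theorem sqrt_mul_self {n 𝕜 : Type*} [Fintype n] [RCLike 𝕜] [DecidableEq n]
    {A : Matrix n n 𝕜} (hA : PosSemidef A) : hA.sqrt * hA.sqrt = A := by
  unfold sqrt
  conv_rhs => rw [hA.1.spectral_theorem, Unitary.conjStarAlgAut_apply]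
  have hU : star hA.1.eigenvectorUnitary.1 * hA.1.eigenvectorUnitary.1 = 1 :=
    Unitary.coe_star_mul_self _
  have hD : diagonal (((↑) : ℝ → 𝕜) ∘ (√·) ∘ hA.1.eigenvalues) *
      diagonal (((↑) : ℝ → 𝕜) ∘ (√·) ∘ hA.1.eigenvalues) =
      diagonal (RCLike.ofReal ∘ hA.1.eigenvalues) := by
    rw [diagonal_mul_diagonal]
    congr 1
    funext i
    simp only [Function.comp_apply]
    rw [← RCLike.ofReal_mul, Real.mul_self_sqrt (hA.eigenvalues_nonneg i)]
  calc _ = hA.1.eigenvectorUnitary.1 * diagonal (((↑) : ℝ → 𝕜) ∘ (√·) ∘ hA.1.eigenvalues) *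
        (star hA.1.eigenvectorUnitary.1 * hA.1.eigenvectorUnitary.1) *
        diagonal (((↑) : ℝ → 𝕜) ∘ (√·) ∘ hA.1.eigenvalues) *
        star hA.1.eigenvectorUnitary.1 := by simp only [mul_assoc]
    _ = _ := by rw [hU, mul_one, mul_assoc _ (diagonal _) (diagonal _), hD]

end Matrix.PosSemidef

/-- With `ρ = (I - α*α)^{1/2}`, `ρ̃ = (I - αα*)^{1/2}`, `a = I + α`, `b = I - α`,
one has `a* ρ̃⁻² a = a ρ⁻² a*`, `b* ρ̃⁻² b = b ρ⁻² b*`, and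
`a* ρ̃⁻² b + a ρ⁻² b* = b* ρ̃⁻² a + b ρ⁻² a* = 2 I`. -/
theorem stmt1 {m : ℕ} (α : Matrix (Fin m) (Fin m) ℂ) (hα : ‖α‖ < 1)
    (h1 : (1 - αᴴ * α).PosSemidef) (h2 : (1 - α * αᴴ).PosSemidef) :
    (1 + α)ᴴ * (h2.sqrt⁻¹ * h2.sqrt⁻¹) * (1 + α)
        = (1 + α) * (h1.sqrt⁻¹ * h1.sqrt⁻¹) * (1 + α)ᴴ ∧
    (1 - α)ᴴ * (h2.sqrt⁻¹ * h2.sqrt⁻¹) * (1 - α)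
        = (1 - α) * (h1.sqrt⁻¹ * h1.sqrt⁻¹) * (1 - α)ᴴ ∧
    (1 + α)ᴴ * (h2.sqrt⁻¹ * h2.sqrt⁻¹) * (1 - α)
        + (1 + α) * (h1.sqrt⁻¹ * h1.sqrt⁻¹) * (1 - α)ᴴ = 2 ∧
    (1 - α)ᴴ * (h2.sqrt⁻¹ * h2.sqrt⁻¹) * (1 + α)
        + (1 - α) * (h1.sqrt⁻¹ * h1.sqrt⁻¹) * (1 + α)ᴴ = 2 := by
  have hcomplete : CompleteSpace (Matrix (Fin m) (Fin m) ℂ) :=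
    FiniteDimensional.complete ℂ _
  have hα0 : (0:ℝ) ≤ ‖α‖ := norm_nonneg _
  have hαH : ‖αᴴ‖ = ‖α‖ := Matrix.l2_opNorm_conjTranspose α
  have hn1 : ‖αᴴ * α‖ < 1 := by
    calc ‖αᴴ * α‖ ≤ ‖αᴴ‖ * ‖α‖ := norm_mul_le _ _
      _ < 1 := by rw [hαH]; nlinarith
  have hn2 : ‖α * αᴴ‖ < 1 := by
    calc ‖α * αᴴ‖ ≤ ‖α‖ * ‖αᴴ‖ := norm_mul_le _ _
      _ < 1 := by rw [hαH]; nlinarith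
  have hu1 : IsUnit ((1 - αᴴ * α).det) := by
    rw [← Matrix.isUnit_iff_isUnit_det]
    exact ⟨Units.oneSub _ hn1, rfl⟩
  have hu2 : IsUnit ((1 - α * αᴴ).det) := by
    rw [← Matrix.isUnit_iff_isUnit_det]
    exact ⟨Units.oneSub _ hn2, rfl⟩
  set A := (1 - αᴴ * α)⁻¹ with hAdef
  set B := (1 - α * αᴴ)⁻¹ with hBdef
  have hs1 : h1.sqrt⁻¹ * h1.sqrt⁻¹ = A := by
    rw [← Matrix.mul_inv_rev, h1.sqrt_mul_self]
  have hs2 : h2.sqrt⁻¹ * h2.sqrt⁻¹ = B := by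
    rw [← Matrix.mul_inv_rev, h2.sqrt_mul_self]
  have hA1 : (1 - αᴴ * α) * A = 1 := Matrix.mul_nonsing_inv _ hu1
  have hA2 : A * (1 - αᴴ * α) = 1 := Matrix.nonsing_inv_mul _ hu1
  have hB1 : (1 - α * αᴴ) * B = 1 := Matrix.mul_nonsing_inv _ hu2
  have hB2 : B * (1 - α * αᴴ) = 1 := Matrix.nonsing_inv_mul _ hu2
  have comm : α * A = B * α := by
    have h : (1 - α * αᴴ) * α = α * (1 - αᴴ * α) := by noncomm_ring
    calc α * A = (B * (1 - α * αᴴ)) * α * A := by rw [hB2, one_mul]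
      _ = B * (α * (1 - αᴴ * α)) * A := by rw [← h]; noncomm_ring
      _ = B * α * ((1 - αᴴ * α) * A) := by noncomm_ring
      _ = B * α := by rw [hA1, mul_one]
  have comm2 : αᴴ * B = A * αᴴ := by
    have h : (1 - αᴴ * α) * αᴴ = αᴴ * (1 - α * αᴴ) := by noncomm_ring
    calc αᴴ * B = (A * (1 - αᴴ * α)) * αᴴ * B := by rw [hA2, one_mul]
      _ = A * (αᴴ * (1 - α * αᴴ)) * B := by rw [← h]; noncomm_ring
      _ = A * αᴴ * ((1 - α * αᴴ) * B) := by noncomm_ring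
      _ = A * αᴴ := by rw [hB1, mul_one]
  have hBA : αᴴ * B * α = A - 1 := by
    rw [comm2]
    have : A * (αᴴ * α) = A - 1 := by
      have := hA2
      rw [mul_sub, mul_one] at this
      linear_combination (norm := noncomm_ring) -this
    rw [← this]; noncomm_ring
  have hAB : α * A * αᴴ = B - 1 := by
    rw [comm]
    have : B * (α * αᴴ) = B - 1 := by
      have := hB2
      rw [mul_sub, mul_one] at this
      linear_combination (norm := noncomm_ring) -this
    rw [← this]; noncomm_ring
  rw [hs1, hs2]
  have hct1 : (1 + α)ᴴ = 1 + αᴴ := by simp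
  have hct2 : (1 - α)ᴴ = 1 - αᴴ := by simp
  rw [hct1, hct2]
  refine ⟨?_, ?_, ?_, ?_⟩
  · have eL : (1 + αᴴ) * B * (1 + α) = B + B * α + αᴴ * B + (αᴴ * B) * α := by
      noncomm_ring
    have eR : (1 + α) * A * (1 + αᴴ) = A + A * αᴴ + α * A + (α * A) * αᴴ := by
      noncomm_ring
    rw [eL, eR, hBA, hAB, comm2, comm]
    abel
  · have eL : (1 - αᴴ) * B * (1 - α) = B - B * α - αᴴ * B + (αᴴ * B) * α := by
      noncomm_ring
    have eR : (1 - α) * A * (1 - αᴴ) = A - A * αᴴ - α * A + (α * A) * αᴴ := by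
      noncomm_ring
    rw [eL, eR, hBA, hAB, comm2, comm]
    abel
  · have eL : (1 + αᴴ) * B * (1 - α) = B - B * α + αᴴ * B - (αᴴ * B) * α := by
      noncomm_ring
    have eR : (1 + α) * A * (1 - αᴴ) = A - A * αᴴ + α * A - (α * A) * αᴴ := by
      noncomm_ring
    rw [eL, eR, hBA, hAB, comm2, comm]
    have : (2 : Matrix (Fin m) (Fin m) ℂ) = 1 + 1 := by norm_num
    rw [this]; abel
  · have eL : (1 - αᴴ) * B * (1 + α) = B + B * α - αᴴ * B - (αᴴ * B) * α := by
      noncomm_ring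
    have eR : (1 - α) * A * (1 + αᴴ) = A + A * αᴴ - α * A - (α * A) * αᴴ := by
      noncomm_ring
    rw [eL, eR, hBA, hAB, comm2, comm]
    have : (2 : Matrix (Fin m) (Fin m) ℂ) = 1 + 1 := by norm_num
    rw [this]; abel
end

section
/- Let A, B, C, D be m×m complex matrices with A ≠ 0, B invertible, and (2√(‖A‖‖D‖) + ‖C‖)‖B^{-1}‖ < 1. Then the matrix Riccati equation XAX + BX + XC + D = 0 has a unique solution X with ‖X‖ < (1 - ‖C‖‖B^{-1}‖)/(2‖A‖‖B^{-1}‖). -/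
open Matrix
open scoped Matrix.Norms.L2Operator

set_option maxHeartbeats 2000000 in
/-- If `A ≠ 0`, `B` is invertible and `(2√(‖A‖‖D‖)+‖C‖)‖B⁻¹‖ < 1`, then the
Riccati equation `XAX + BX + XC + D = 0` has a unique solution with
`‖X‖ < (1-‖C‖‖B⁻¹‖)/(2‖A‖‖B⁻¹‖)`. -/
theorem stmt6 {m : ℕ} (A B C D : Matrix (Fin m) (Fin m) ℂ) (hA : A ≠ 0) (hB : IsUnit B)
    (h : (2 * Real.sqrt (‖A‖ * ‖D‖) + ‖C‖) * ‖B⁻¹‖ < 1) :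
    ∃! X : Matrix (Fin m) (Fin m) ℂ,
      X * A * X + B * X + X * C + D = 0 ∧
        ‖X‖ < (1 - ‖C‖ * ‖B⁻¹‖) / (2 * ‖A‖ * ‖B⁻¹‖) := by
  rcases Nat.eq_zero_or_pos m with hm | hm
  · subst hm
    exact absurd (Subsingleton.elim A 0) hA
  obtain ⟨n, rfl⟩ := Nat.exists_eq_succ_of_ne_zero hm.ne'
  -- basic positivity facts
  have hdet := (Matrix.isUnit_iff_isUnit_det B).mp hB
  have hBB : B⁻¹ * B = 1 := Matrix.nonsing_inv_mul B hdet
  have hBB' : B * B⁻¹ = 1 := Matrix.mul_nonsing_inv B hdet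
  have ha : (0:ℝ) < ‖A‖ := norm_pos_iff.mpr hA
  have hBinv : B⁻¹ ≠ (0 : Matrix (Fin (n+1)) (Fin (n+1)) ℂ) := by
    intro hz
    rw [hz, zero_mul] at hBB
    exact one_ne_zero hBB.symm
  have hb : (0:ℝ) < ‖B⁻¹‖ := norm_pos_iff.mpr hBinv
  have hc : (0:ℝ) ≤ ‖C‖ := norm_nonneg C
  have hd : (0:ℝ) ≤ ‖D‖ := norm_nonneg D
  have hsqsq : Real.sqrt (‖A‖ * ‖D‖) ^ 2 = ‖A‖ * ‖D‖ := Real.sq_sqrt (mul_nonneg ha.le hd)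
  have hsq0 : (0:ℝ) ≤ Real.sqrt (‖A‖ * ‖D‖) := Real.sqrt_nonneg _
  have hcb : ‖C‖ * ‖B⁻¹‖ < 1 := by nlinarith
  have hd1 : (0:ℝ) < 1 - ‖C‖*‖B⁻¹‖ - 2*Real.sqrt (‖A‖*‖D‖)*‖B⁻¹‖ := by nlinarith
  have hd2 : (0:ℝ) < 1 - ‖C‖*‖B⁻¹‖ + 2*Real.sqrt (‖A‖*‖D‖)*‖B⁻¹‖ := by nlinarith
  have hDisc : (0:ℝ) < (1 - ‖C‖*‖B⁻¹‖)^2 - 4*‖A‖*‖B⁻¹‖^2*‖D‖ := by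
    nlinarith [mul_pos hd1 hd2]
  set s : ℝ := Real.sqrt ((1 - ‖C‖*‖B⁻¹‖)^2 - 4*‖A‖*‖B⁻¹‖^2*‖D‖) with hs_def
  have hs2 : s^2 = (1 - ‖C‖*‖B⁻¹‖)^2 - 4*‖A‖*‖B⁻¹‖^2*‖D‖ := Real.sq_sqrt hDisc.le
  have hs_pos : 0 < s := Real.sqrt_pos.mpr hDisc
  have hab : (0:ℝ) < 2*‖A‖*‖B⁻¹‖ := by positivity
  set r : ℝ := (1 - ‖C‖*‖B⁻¹‖ - s)/(2*‖A‖*‖B⁻¹‖) with hr_def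
  have hrkey : 2*‖A‖*‖B⁻¹‖*r = 1 - ‖C‖*‖B⁻¹‖ - s := by
    rw [hr_def, mul_comm, div_mul_cancel₀ _ hab.ne']
  have h4d : (0:ℝ) ≤ 4*‖A‖*‖B⁻¹‖^2*‖D‖ :=
    mul_nonneg (mul_nonneg (mul_nonneg (by norm_num) ha.le) (sq_nonneg _)) hd
  have hsle : s ≤ 1 - ‖C‖*‖B⁻¹‖ := by nlinarith [hs2, h4d, hs_pos, hcb]
  have hr0 : 0 ≤ r := by
    rw [hr_def]; apply div_nonneg (by linarith) hab.le
  have hu : (2*‖A‖*‖B⁻¹‖*r)^2 = (1 - ‖C‖*‖B⁻¹‖ - s)^2 := by rw [hrkey]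
  have h4ab : (0:ℝ) < 4*‖A‖*‖B⁻¹‖ := by
    have := mul_pos (mul_pos (by norm_num : (0:ℝ) < 4) ha) hb
    linarith
  have key1' : 4*‖A‖*‖B⁻¹‖*(‖B⁻¹‖*(‖A‖*r^2 + ‖C‖*r + ‖D‖)) = 4*‖A‖*‖B⁻¹‖*r := by
    linear_combination hu + (2*‖C‖*‖B⁻¹‖ - 2)*hrkey + hs2
  have key1 : ‖B⁻¹‖*(‖A‖*r^2 + ‖C‖*r + ‖D‖) ≤ r :=
    le_of_eq (mul_left_cancel₀ h4ab.ne' key1')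
  have key2 : ‖B⁻¹‖*(2*‖A‖*r + ‖C‖) < 1 := by nlinarith [hrkey, hs_pos]
  have hR : 2*‖A‖*‖B⁻¹‖*((1 - ‖C‖*‖B⁻¹‖)/(2*‖A‖*‖B⁻¹‖)) = 1 - ‖C‖*‖B⁻¹‖ := by
    rw [mul_comm, div_mul_cancel₀ _ hab.ne']
  have hrR : r < (1 - ‖C‖*‖B⁻¹‖)/(2*‖A‖*‖B⁻¹‖) := by
    rw [hr_def, div_lt_div_iff_of_pos_right hab]
    linarith
  -- the map
  set Φ : Matrix (Fin (n+1)) (Fin (n+1)) ℂ → Matrix (Fin (n+1)) (Fin (n+1)) ℂ :=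
    fun X => -(B⁻¹ * (X*A*X + X*C + D)) with hΦ_def
  have heq : ∀ X : Matrix (Fin (n+1)) (Fin (n+1)) ℂ,
      (X*A*X + B*X + X*C + D = 0) ↔ X = Φ X := by
    intro X
    constructor
    · intro hX
      have hBX : B * X = -(X*A*X + X*C + D) := by
        apply eq_neg_of_add_eq_zero_left
        rw [← hX]; abel
      calc X = B⁻¹ * (B * X) := by rw [← mul_assoc, hBB, one_mul]
        _ = Φ X := by rw [hBX, mul_neg]
    · intro hX
      have hBX : B * X = -(X*A*X + X*C + D) := by
        conv_lhs => rw [hX]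
        rw [hΦ_def]
        simp only
        rw [mul_neg, ← mul_assoc, hBB', one_mul]
      rw [show X*A*X + B*X + X*C + D = B*X + (X*A*X + X*C + D) from by abel, hBX]
      abel
  -- norm bounds
  have Φbound : ∀ X : Matrix (Fin (n+1)) (Fin (n+1)) ℂ,
      ‖Φ X‖ ≤ ‖B⁻¹‖ * (‖A‖*‖X‖^2 + ‖C‖*‖X‖ + ‖D‖) := by
    intro X
    have e0 : ‖X*A*X + X*C + D‖ ≤ ‖X*A*X‖ + ‖X*C‖ + ‖D‖ := norm_add₃_le
    have e1 : ‖X*A*X‖ ≤ ‖X‖*‖A‖*‖X‖ :=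
      (norm_mul_le _ _).trans (mul_le_mul_of_nonneg_right (norm_mul_le X A) (norm_nonneg X))
    have e2 : ‖X*C‖ ≤ ‖X‖*‖C‖ := norm_mul_le _ _
    have eΦ : ‖Φ X‖ = ‖B⁻¹ * (X*A*X + X*C + D)‖ := norm_neg _
    rw [eΦ]
    refine (norm_mul_le _ _).trans ?_
    refine mul_le_mul_of_nonneg_left ?_ (norm_nonneg _)
    nlinarith [norm_nonneg X]
  have Φcontr : ∀ X Y : Matrix (Fin (n+1)) (Fin (n+1)) ℂ,
      ‖Φ X - Φ Y‖ ≤ ‖B⁻¹‖ * ((‖X‖ + ‖Y‖)*‖A‖ + ‖C‖) * ‖X - Y‖ := by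
    intro X Y
    have hdiff : Φ X - Φ Y = -(B⁻¹ * (X*A*(X-Y) + (X-Y)*A*Y + (X-Y)*C)) := by
      rw [hΦ_def]; simp only; noncomm_ring
    have e0 : ‖X*A*(X-Y) + (X-Y)*A*Y + (X-Y)*C‖
        ≤ ‖X*A*(X-Y)‖ + ‖(X-Y)*A*Y‖ + ‖(X-Y)*C‖ := norm_add₃_le
    have e1 : ‖X*A*(X-Y)‖ ≤ ‖X‖*‖A‖*‖X-Y‖ :=
      (norm_mul_le _ _).trans (mul_le_mul_of_nonneg_right (norm_mul_le X A) (norm_nonneg _))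
    have e2 : ‖(X-Y)*A*Y‖ ≤ ‖X-Y‖*‖A‖*‖Y‖ :=
      (norm_mul_le _ _).trans (mul_le_mul_of_nonneg_right (norm_mul_le _ A) (norm_nonneg _))
    have e3 : ‖(X-Y)*C‖ ≤ ‖X-Y‖*‖C‖ := norm_mul_le _ _
    have eT : ‖X*A*(X-Y) + (X-Y)*A*Y + (X-Y)*C‖ ≤ ((‖X‖ + ‖Y‖)*‖A‖ + ‖C‖) * ‖X - Y‖ := by
      nlinarith [norm_nonneg X, norm_nonneg Y, norm_nonneg (X - Y), ha.le]
    calc ‖Φ X - Φ Y‖ = ‖B⁻¹ * (X*A*(X-Y) + (X-Y)*A*Y + (X-Y)*C)‖ := by rw [hdiff, norm_neg]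
      _ ≤ ‖B⁻¹‖ * ‖X*A*(X-Y) + (X-Y)*A*Y + (X-Y)*C‖ := norm_mul_le _ _
      _ ≤ ‖B⁻¹‖ * (((‖X‖ + ‖Y‖)*‖A‖ + ‖C‖) * ‖X - Y‖) :=
          mul_le_mul_of_nonneg_left eT (norm_nonneg B⁻¹)
      _ = ‖B⁻¹‖ * ((‖X‖ + ‖Y‖)*‖A‖ + ‖C‖) * ‖X - Y‖ := by ring
  -- set up the fixed point on the closed ball
  set S : Set (Matrix (Fin (n+1)) (Fin (n+1)) ℂ) := Metric.closedBall 0 r with hS_def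
  have hS_closed : IsClosed S := Metric.isClosed_closedBall
  haveI : CompleteSpace S := hS_closed.completeSpace_coe
  haveI : Nonempty S := ⟨⟨0, Metric.mem_closedBall_self hr0⟩⟩
  have hmem : ∀ X : Matrix (Fin (n+1)) (Fin (n+1)) ℂ, X ∈ S ↔ ‖X‖ ≤ r := by
    intro X; rw [hS_def, Metric.mem_closedBall, dist_zero_right]
  have hmaps : ∀ X : Matrix (Fin (n+1)) (Fin (n+1)) ℂ, ‖X‖ ≤ r → ‖Φ X‖ ≤ r := by
    intro X hX
    refine (Φbound X).trans (le_trans ?_ key1)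
    have hX0 : (0:ℝ) ≤ ‖X‖ := norm_nonneg X
    have hXX : ‖X‖ * ‖X‖ ≤ r * r := mul_le_mul hX hX hX0 hr0
    have t1 : ‖A‖*(‖X‖*‖X‖) ≤ ‖A‖*(r*r) := mul_le_mul_of_nonneg_left hXX ha.le
    have t2 : ‖C‖*‖X‖ ≤ ‖C‖*r := mul_le_mul_of_nonneg_left hX hc
    have inner : ‖A‖*‖X‖^2 + ‖C‖*‖X‖ + ‖D‖ ≤ ‖A‖*r^2 + ‖C‖*r + ‖D‖ := by nlinarith
    exact mul_le_mul_of_nonneg_left inner hb.le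
  set k : NNReal := ⟨‖B⁻¹‖*(2*‖A‖*r + ‖C‖),
    mul_nonneg hb.le (add_nonneg (mul_nonneg (mul_nonneg (by norm_num) ha.le) hr0) hc)⟩
    with hk_def
  have hkc : (k : ℝ) = ‖B⁻¹‖*(2*‖A‖*r + ‖C‖) := rfl
  set f : S → S := fun X => ⟨Φ X.1, (hmem _).mpr (hmaps _ ((hmem _).mp X.2))⟩ with hf_def
  have hf : ContractingWith k f := by
    constructor
    · rw [← NNReal.coe_lt_one, hkc]; exact key2
    · apply LipschitzWith.of_dist_le_mul
      intro X Y
      simp only [Subtype.dist_eq, dist_eq_norm]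
      have hXr : ‖(X:Matrix (Fin (n+1)) (Fin (n+1)) ℂ)‖ ≤ r := (hmem _).mp X.2
      have hYr : ‖(Y:Matrix (Fin (n+1)) (Fin (n+1)) ℂ)‖ ≤ r := (hmem _).mp Y.2
      refine (Φcontr X.1 Y.1).trans ?_
      rw [hkc]
      refine mul_le_mul_of_nonneg_right ?_ (norm_nonneg _)
      nlinarith
  set X₀ : S := ContractingWith.fixedPoint f hf with hX₀_def
  have hfix : Φ X₀.1 = X₀.1 := congrArg Subtype.val (ContractingWith.fixedPoint_isFixedPt hf)
  have hX₀r : ‖X₀.1‖ ≤ r := (hmem _).mp X₀.2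
  refine ⟨X₀.1, ⟨(heq X₀.1).mpr hfix.symm, lt_of_le_of_lt hX₀r hrR⟩, ?_⟩
  intro Y ⟨hYeq, hYlt⟩
  have hYfix : Y = Φ Y := (heq Y).mp hYeq
  have hX₀lt : ‖X₀.1‖ < (1 - ‖C‖*‖B⁻¹‖)/(2*‖A‖*‖B⁻¹‖) := lt_of_le_of_lt hX₀r hrR
  have hcon := Φcontr Y X₀.1
  rw [hfix, ← hYfix] at hcon
  have h2R : ‖Y‖ + ‖X₀.1‖ < 2*((1 - ‖C‖*‖B⁻¹‖)/(2*‖A‖*‖B⁻¹‖)) := by linarith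
  have hq1 : (‖Y‖ + ‖X₀.1‖)*‖A‖ < 2*((1 - ‖C‖*‖B⁻¹‖)/(2*‖A‖*‖B⁻¹‖))*‖A‖ :=
    mul_lt_mul_of_pos_right h2R ha
  have hq2 : ‖B⁻¹‖*((‖Y‖ + ‖X₀.1‖)*‖A‖ + ‖C‖)
      < ‖B⁻¹‖*(2*((1 - ‖C‖*‖B⁻¹‖)/(2*‖A‖*‖B⁻¹‖))*‖A‖ + ‖C‖) :=
    mul_lt_mul_of_pos_left (by linarith) hb
  have hq3 : ‖B⁻¹‖*(2*((1 - ‖C‖*‖B⁻¹‖)/(2*‖A‖*‖B⁻¹‖))*‖A‖ + ‖C‖) = 1 := by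
    linear_combination hR
  have hq : ‖B⁻¹‖ * ((‖Y‖ + ‖X₀.1‖)*‖A‖ + ‖C‖) < 1 := hq2.trans_eq hq3
  have hle0 : ‖Y - X₀.1‖ ≤ 0 := by
    by_contra h'
    push_neg at h'
    have := mul_lt_mul_of_pos_right hq h'
    rw [one_mul] at this
    linarith
  have : Y - X₀.1 = 0 := by
    rw [← norm_le_zero_iff]; exact hle0
  exact sub_eq_zero.mp this
end

section
/- Let A, B, C, D be m×m complex matrices with A ≠ 0, B invertible, and (2√(‖A‖‖D‖) + ‖C‖)‖B^{-1}‖ < 1. Then the unique solution X of XAX + BX + XC + D = 0 with ‖X‖ < (1-‖C‖‖B^{-1}‖)/(2‖A‖‖B^{-1}‖) satisfies the bound ‖X‖ ≤ r₋, where r₋ = (1-‖C‖‖B^{-1}‖)/(2‖A‖‖B^{-1}‖) - sqrt( ((1-‖C‖‖B^{-1}‖)/(2‖A‖‖B^{-1}‖))² - ‖D‖/‖A‖ ). -/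
open Matrix
open scoped Matrix.Norms.L2Operator

/-- Under the Riccati lemma hypotheses, any solution `X` of
`XAX + BX + XC + D = 0` with `‖X‖ < (1-‖C‖‖B⁻¹‖)/(2‖A‖‖B⁻¹‖)` satisfies `‖X‖ ≤ r₋`, where
`r₋` is the smaller root of the associated scalar quadratic. -/
theorem stmt7 {m : ℕ} (A B C D : Matrix (Fin m) (Fin m) ℂ) (hA : A ≠ 0) (hB : IsUnit B)
    (h : (2 * Real.sqrt (‖A‖ * ‖D‖) + ‖C‖) * ‖B⁻¹‖ < 1) :
    ∀ X : Matrix (Fin m) (Fin m) ℂ,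
      X * A * X + B * X + X * C + D = 0 →
      ‖X‖ < (1 - ‖C‖ * ‖B⁻¹‖) / (2 * ‖A‖ * ‖B⁻¹‖) →
      ‖X‖ ≤ (1 - ‖C‖ * ‖B⁻¹‖) / (2 * ‖A‖ * ‖B⁻¹‖)
        - Real.sqrt (((1 - ‖C‖ * ‖B⁻¹‖) / (2 * ‖A‖ * ‖B⁻¹‖)) ^ 2 - ‖D‖ / ‖A‖) := by
  intro X heq hx
  have ha : 0 < ‖A‖ := norm_pos_iff.mpr hA
  have hBdet : IsUnit B.det := (Matrix.isUnit_iff_isUnit_det B).mp hB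
  have hm : 0 < m := by
    rcases Nat.eq_zero_or_pos m with hm0 | hm0
    · exfalso; subst hm0; exact hA (Subsingleton.elim A 0)
    · exact hm0
  haveI : Nonempty (Fin m) := ⟨⟨0, hm⟩⟩
  have hBinv : B⁻¹ ≠ 0 := by
    intro h0
    have h1 : B⁻¹ * B = 1 := Matrix.nonsing_inv_mul B hBdet
    rw [h0, zero_mul] at h1
    exact one_ne_zero h1.symm
  have hb : 0 < ‖B⁻¹‖ := norm_pos_iff.mpr hBinv
  set a := ‖A‖ with ha_def
  set b := ‖B⁻¹‖ with hb_def
  set c := ‖C‖ with hc_def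
  set d := ‖D‖ with hd_def
  set x := ‖X‖ with hx_def
  set r₀ := (1 - c * b) / (2 * a * b) with hr0_def
  -- X = -(B⁻¹ * (X*A*X + X*C + D))
  have hsum : B * X + (X * A * X + X * C + D) = 0 := by
    rw [← heq]; noncomm_ring
  have h1 : B * X = -(X * A * X + X * C + D) := eq_neg_of_add_eq_zero_left hsum
  have h2 : X = -(B⁻¹ * (X * A * X + X * C + D)) := by
    calc X = B⁻¹ * (B * X) := by rw [← Matrix.mul_assoc, Matrix.nonsing_inv_mul B hBdet, one_mul]
    _ = -(B⁻¹ * (X * A * X + X * C + D)) := by rw [h1, Matrix.mul_neg]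
  -- key norm inequality
  have key : x ≤ b * (a * x ^ 2 + c * x + d) := by
    have n1 : ‖X * A * X‖ ≤ a * x ^ 2 := by
      calc ‖X * A * X‖ ≤ ‖X * A‖ * ‖X‖ := norm_mul_le _ _
      _ ≤ ‖X‖ * ‖A‖ * ‖X‖ := by
          exact mul_le_mul_of_nonneg_right (norm_mul_le _ _) (norm_nonneg _)
      _ = a * x ^ 2 := by ring
    have n2 : ‖X * C‖ ≤ x * c := norm_mul_le _ _
    calc x = ‖-(B⁻¹ * (X * A * X + X * C + D))‖ := by rw [hx_def, ← h2]
    _ = ‖B⁻¹ * (X * A * X + X * C + D)‖ := norm_neg _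
    _ ≤ b * ‖X * A * X + X * C + D‖ := norm_mul_le _ _
    _ ≤ b * (‖X * A * X‖ + ‖X * C‖ + ‖D‖) := by
        apply mul_le_mul_of_nonneg_left _ hb.le
        exact norm_add₃_le
    _ ≤ b * (a * x ^ 2 + c * x + d) := by
        apply mul_le_mul_of_nonneg_left _ hb.le
        nlinarith [n1, n2]
  -- scalar analysis
  have hr0x : x < r₀ := hx
  have h2r0 : 2 * a * b * r₀ = 1 - c * b := by
    rw [hr0_def]; field_simp
  have hqx : 2 * r₀ * x ≤ x ^ 2 + d / a := by
    have h3 : (1 - c * b) * x ≤ a * b * x ^ 2 + d * b := by nlinarith [key]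
    rw [← h2r0] at h3
    have h4 : 2 * r₀ * x * (a * b) ≤ (x ^ 2 + d / a) * (a * b) := by
      have : d / a * (a * b) = d * b := by field_simp
      nlinarith [h3, this]
    exact le_of_mul_le_mul_right h4 (by positivity)
  have hsq : r₀ ^ 2 - d / a ≤ (r₀ - x) ^ 2 := by
    have hexp : (r₀ - x) ^ 2 = r₀ ^ 2 - 2 * r₀ * x + x ^ 2 := by ring
    linarith
  have hs : Real.sqrt (r₀ ^ 2 - d / a) ≤ r₀ - x := by
    calc Real.sqrt (r₀ ^ 2 - d / a) ≤ Real.sqrt ((r₀ - x) ^ 2) := Real.sqrt_le_sqrt hsq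
    _ = |r₀ - x| := Real.sqrt_sq_eq_abs _
    _ = r₀ - x := abs_of_pos (by linarith)
  linarith
end

section
/- Under the hypotheses of the matrix Riccati lemma (B invertible, A ≠ 0, (2√(‖A‖‖D‖)+‖C‖)‖B^{-1}‖ < 1), the map F(X) = -B^{-1}XAX - B^{-1}XC - B^{-1}D is a strict contraction on every closed ball B_λ = {X : ‖X‖ ≤ λ} with λ < (1-‖C‖‖B^{-1}‖)/(2‖A‖‖B^{-1}‖), with Lipschitz constant 2λ‖A‖‖B^{-1}‖ + ‖C‖‖B^{-1}‖ < 1. -/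
open Matrix
open scoped Matrix.Norms.L2Operator

set_option maxHeartbeats 2000000 in
/-- Under the Riccati lemma hypotheses, `F(X) = -B⁻¹XAX - B⁻¹XC - B⁻¹D` is a
strict contraction on every closed ball of radius `λ < (1-‖C‖‖B⁻¹‖)/(2‖A‖‖B⁻¹‖)`, with
Lipschitz constant `2λ‖A‖‖B⁻¹‖ + ‖C‖‖B⁻¹‖ < 1`. -/
theorem stmt8 {m : ℕ} (A B C D : Matrix (Fin m) (Fin m) ℂ) (hA : A ≠ 0) (hB : IsUnit B)
    (h : (2 * Real.sqrt (‖A‖ * ‖D‖) + ‖C‖) * ‖B⁻¹‖ < 1)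
    (lam : ℝ) (hlam0 : 0 ≤ lam)
    (hlam : lam < (1 - ‖C‖ * ‖B⁻¹‖) / (2 * ‖A‖ * ‖B⁻¹‖)) :
    (∀ X Y : Matrix (Fin m) (Fin m) ℂ, ‖X‖ ≤ lam → ‖Y‖ ≤ lam →
      ‖(-(B⁻¹ * X * A * X) - B⁻¹ * X * C - B⁻¹ * D)
          - (-(B⁻¹ * Y * A * Y) - B⁻¹ * Y * C - B⁻¹ * D)‖
        ≤ (2 * lam * ‖A‖ * ‖B⁻¹‖ + ‖C‖ * ‖B⁻¹‖) * ‖X - Y‖) ∧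
    2 * lam * ‖A‖ * ‖B⁻¹‖ + ‖C‖ * ‖B⁻¹‖ < 1 := by
  have hBinv : B⁻¹ * B = 1 := nonsing_inv_mul B ((isUnit_iff_isUnit_det B).mp hB)
  have hApos : 0 < ‖A‖ := norm_pos_iff.mpr hA
  have hBpos : 0 < ‖B⁻¹‖ := by
    rcases eq_or_lt_of_le (norm_nonneg B⁻¹) with h0 | h0
    · exfalso
      apply hA
      have hB0 : B⁻¹ = 0 := by rwa [eq_comm, norm_eq_zero] at h0
      have : (1 : Matrix (Fin m) (Fin m) ℂ) = 0 := by rw [← hBinv, hB0, zero_mul]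
      calc A = A * 1 := (mul_one A).symm
        _ = 0 := by rw [this, mul_zero]
    · exact h0
  have hkey : lam * (2 * ‖A‖ * ‖B⁻¹‖) < 1 - ‖C‖ * ‖B⁻¹‖ :=
    (lt_div_iff₀ (by positivity)).mp hlam
  constructor
  · intro X Y hX hY
    have heq : (-(B⁻¹ * X * A * X) - B⁻¹ * X * C - B⁻¹ * D)
          - (-(B⁻¹ * Y * A * Y) - B⁻¹ * Y * C - B⁻¹ * D)
        = -(B⁻¹ * X * A * (X - Y)) - B⁻¹ * (X - Y) * A * Y - B⁻¹ * (X - Y) * C := by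
      noncomm_ring
    rw [heq]
    have h1 : ‖-(B⁻¹ * X * A * (X - Y)) - B⁻¹ * (X - Y) * A * Y - B⁻¹ * (X - Y) * C‖
        ≤ ‖B⁻¹ * X * A * (X - Y)‖ + ‖B⁻¹ * (X - Y) * A * Y‖ + ‖B⁻¹ * (X - Y) * C‖ := by
      calc _ ≤ ‖-(B⁻¹ * X * A * (X - Y)) - B⁻¹ * (X - Y) * A * Y‖ + ‖B⁻¹ * (X - Y) * C‖ :=
            norm_sub_le _ _
        _ ≤ ‖B⁻¹ * X * A * (X - Y)‖ + ‖B⁻¹ * (X - Y) * A * Y‖ + ‖B⁻¹ * (X - Y) * C‖ := by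
            gcongr
            calc _ ≤ ‖-(B⁻¹ * X * A * (X - Y))‖ + ‖B⁻¹ * (X - Y) * A * Y‖ := norm_sub_le _ _
              _ = _ := by rw [norm_neg]
    refine h1.trans ?_
    have t1 : ‖B⁻¹ * X * A * (X - Y)‖ ≤ ‖B⁻¹‖ * lam * ‖A‖ * ‖X - Y‖ := by
      calc ‖B⁻¹ * X * A * (X - Y)‖ ≤ ‖B⁻¹ * X * A‖ * ‖X - Y‖ := norm_mul_le _ _
        _ ≤ ‖B⁻¹ * X‖ * ‖A‖ * ‖X - Y‖ := by gcongr; exact norm_mul_le _ _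
        _ ≤ ‖B⁻¹‖ * ‖X‖ * ‖A‖ * ‖X - Y‖ := by gcongr; exact norm_mul_le _ _
        _ ≤ ‖B⁻¹‖ * lam * ‖A‖ * ‖X - Y‖ := by gcongr
    have t2 : ‖B⁻¹ * (X - Y) * A * Y‖ ≤ ‖B⁻¹‖ * ‖X - Y‖ * ‖A‖ * lam := by
      calc ‖B⁻¹ * (X - Y) * A * Y‖ ≤ ‖B⁻¹ * (X - Y) * A‖ * ‖Y‖ := norm_mul_le _ _
        _ ≤ ‖B⁻¹ * (X - Y)‖ * ‖A‖ * ‖Y‖ := by gcongr; exact norm_mul_le _ _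
        _ ≤ ‖B⁻¹‖ * ‖X - Y‖ * ‖A‖ * ‖Y‖ := by gcongr; exact norm_mul_le _ _
        _ ≤ ‖B⁻¹‖ * ‖X - Y‖ * ‖A‖ * lam := by gcongr
    have t3 : ‖B⁻¹ * (X - Y) * C‖ ≤ ‖B⁻¹‖ * ‖X - Y‖ * ‖C‖ := by
      calc ‖B⁻¹ * (X - Y) * C‖ ≤ ‖B⁻¹ * (X - Y)‖ * ‖C‖ := norm_mul_le _ _
        _ ≤ ‖B⁻¹‖ * ‖X - Y‖ * ‖C‖ := by gcongr; exact norm_mul_le _ _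
    nlinarith [norm_nonneg (X - Y)]
  · nlinarith [Real.sqrt_nonneg (‖A‖ * ‖D‖), norm_nonneg C]
end
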